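/- arXiv:1510.02021 — 3 statements merged into one kernel-verified Lean document; each statement's English description precedes it below -/
import Mathlib

section
/- Let q be a prime power, let d be a positive divisor of q²−1 and write d = n·gcd(q+1, d). Let ξ be a primitive element of F_{q²}. Let a, b, c ∈ F_{q²} and j ∈ ℤ satisfy a·b ≠ 0, b = ξ^{(q−1)·j·(d/n)}·a^q and a·c^q = b^q·c. Let u, v ∈ F_{q²} satisfy u^{q+1} = v^{q+1} and b·u ≠ a·v, and let r be a positive integer with gcd(r, (q²−1)/d) = 1. Let φ be a polynomial with coefficients in the subfield F_q of F_{q²} and define f(x) = (a·x^q + b·x + c)^r · φ((a·x^q + b·x + c)^{(q²−1)/d}) + u·x^q + v·x. Then f is a permutation polynomial of F_{q²} if and only if B + A^{1−r}·B^{q·r} ≠ 0 and x^r·φ(x)^{(q²−1)/d} permutes U_n. -/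
private lemma aux_frob {F : Type*} [Field F] [Fintype F] (q : ℕ) (hq : IsPrimePow q)
    (hF : Fintype.card F = q ^ 2) : ∃ σ : F →+* F, ∀ x, σ x = x ^ q := by
  obtain ⟨p, k, hp, hk, hpk⟩ := hq
  have hp' : p.Prime := Nat.prime_iff.2 hp
  have hchar : CharP F (ringChar F) := ringChar.charP F
  have hp0' : (ringChar F).Prime := CharP.char_is_prime F _
  obtain ⟨m, -, hm⟩ := FiniteField.card F (ringChar F)
  have hpq : p ∣ q := hpk ▸ dvd_pow_self p hk.ne'
  have hdvd : p ∣ (ringChar F) ^ (m : ℕ) := by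
    rw [← hm, hF]
    exact hpq.trans (dvd_pow_self q two_ne_zero)
  have hpp0 : p = ringChar F :=
    (Nat.prime_dvd_prime_iff_eq hp' hp0').1 (hp'.dvd_of_dvd_pow hdvd)
  haveI : CharP F p := hpp0 ▸ hchar
  haveI : ExpChar F p := .prime hp'
  exact ⟨iterateFrobenius F p k, fun x => by rw [iterateFrobenius_def, hpk]⟩

private lemma aux_eval {F : Type*} [Field F] (q : ℕ) (σ : F →+* F) (hσ : ∀ x : F, σ x = x ^ q)
    (φ : Polynomial F) (hφ : ∀ i, (φ.coeff i) ^ q = φ.coeff i) (x : F) :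
    (φ.eval x) ^ q = φ.eval (x ^ q) := by
  rw [← hσ, Polynomial.eval_eq_sum_range, Polynomial.eval_eq_sum_range, map_sum]
  refine Finset.sum_congr rfl fun i _ => ?_
  rw [map_mul, map_pow, hσ, hσ, hφ]

private lemma aux_gen {F : Type*} [Field F] [Fintype F] (q : ℕ)
    (hF : Fintype.card F = q ^ 2) (ξ : F) (hξ : orderOf ξ = q ^ 2 - 1)
    (hq2 : 2 ≤ q) : ∀ x : F, x ≠ 0 → ∃ i : ℤ, ξ ^ i = x := by
  have hM : 0 < q ^ 2 - 1 := by
    have : 4 ≤ q ^ 2 := by nlinarith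
    omega
  have hξ0 : ξ ≠ 0 := by
    intro h
    have h1 := pow_orderOf_eq_one ξ
    rw [hξ, h, zero_pow hM.ne'] at h1
    exact zero_ne_one h1
  set Ξ : Fˣ := Units.mk0 ξ hξ0 with hΞ
  have hord : orderOf Ξ = q ^ 2 - 1 := by rw [← orderOf_units]; exact hξ
  have hcard : Nat.card Fˣ = q ^ 2 - 1 := by
    classical
    rw [Nat.card_eq_fintype_card, Fintype.card_units, hF]
  have htop : Subgroup.zpowers Ξ = ⊤ := by
    apply Subgroup.eq_top_of_card_eq
    rw [Nat.card_zpowers, hord, hcard]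
  intro x hx
  obtain ⟨i, hi⟩ := Subgroup.mem_zpowers_iff.1 (htop ▸ Subgroup.mem_top (Units.mk0 x hx))
  refine ⟨i, ?_⟩
  have := congrArg (Units.val) hi
  rw [Units.val_zpow_eq_zpow_val] at this
  exact this

private lemma aux_rootbound {F : Type*} [Field F] (m : ℕ) (hm : 0 < m) (w : F) :
    {x : F | x ^ m = w}.ncard ≤ m := by
  classical
  have hsub : {x : F | x ^ m = w} ⊆ ↑(Polynomial.nthRoots m w).toFinset := by
    intro x hx
    simp only [Finset.mem_coe, Multiset.mem_toFinset]
    exact (Polynomial.mem_nthRoots hm).2 hx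
  calc {x : F | x ^ m = w}.ncard ≤ ((Polynomial.nthRoots m w).toFinset : Set F).ncard :=
        Set.ncard_le_ncard hsub (Set.toFinite _)
    _ = (Polynomial.nthRoots m w).toFinset.card := Set.ncard_coe_finset _
    _ ≤ Multiset.card (Polynomial.nthRoots m w) := Multiset.toFinset_card_le _
    _ ≤ m := Polynomial.card_nthRoots m w

private lemma aux_ranknull {F : Type*} [Field F] [Fintype F] (θ : F →+ F) :
    (Set.range θ).ncard * {x : F | θ x = 0}.ncard = Fintype.card F := by
  classical
  have h1 := AddSubgroup.card_eq_card_quotient_mul_card_addSubgroup θ.ker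
  have h2 : Nat.card (F ⧸ θ.ker) = Nat.card θ.range :=
    Nat.card_congr (QuotientAddGroup.quotientKerEquivRange θ).toEquiv
  have h3 : Nat.card θ.range = (Set.range θ).ncard := by
    rw [← Nat.card_coe_set_eq]
    rfl
  have h4 : Nat.card θ.ker = {x : F | θ x = 0}.ncard := by
    rw [← Nat.card_coe_set_eq]
    congr 1
  rw [Nat.card_eq_fintype_card] at h1
  rw [h1, h2, h3, h4]

private lemma arith_fact (q : ℕ) (hq2 : 2 ≤ q) : q ^ 2 - 1 = (q - 1) * (q + 1) := by
  have h1 : 1 ≤ q := by omega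
  have h2 : 1 ≤ q ^ 2 := by nlinarith
  zify [h1, h2]
  ring

private lemma arith_main (q d n s g' : ℕ) (hq2 : 2 ≤ q) (hd0 : 0 < d)
    (hg' : g' = Nat.gcd (q + 1) d) (hn : d = n * g') (hs : d * s = q ^ 2 - 1) :
    n * Nat.gcd ((q + 1) * s) (q ^ 2 - 1) = q ^ 2 - 1 ∧
      n * Nat.gcd (q - 1) s = q - 1 ∧ (∃ w, s * n = (q - 1) * w) := by
  have hg0 : 0 < g' := by
    rw [hg']
    exact Nat.gcd_pos_of_pos_left _ (by omega)
  have hfact : q ^ 2 - 1 = (q - 1) * (q + 1) := arith_fact q hq2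
  constructor
  · -- n * gcd ((q+1)*s) (q^2-1) = q^2-1
    have h1 : d * Nat.gcd ((q + 1) * s) (q ^ 2 - 1) = (q ^ 2 - 1) * g' := by
      calc d * Nat.gcd ((q + 1) * s) (q ^ 2 - 1)
          = Nat.gcd (d * ((q + 1) * s)) (d * (q ^ 2 - 1)) := (Nat.gcd_mul_left d _ _).symm
        _ = Nat.gcd ((q ^ 2 - 1) * (q + 1)) ((q ^ 2 - 1) * d) := by
            rw [show d * ((q + 1) * s) = (q ^ 2 - 1) * (q + 1) by rw [← hs]; ring,
              mul_comm d (q ^ 2 - 1)]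
        _ = (q ^ 2 - 1) * Nat.gcd (q + 1) d := Nat.gcd_mul_left _ _ _
        _ = (q ^ 2 - 1) * g' := by rw [hg']
    rw [hn] at h1
    have := Nat.eq_of_mul_eq_mul_right hg0
      (show n * Nat.gcd ((q + 1) * s) (q ^ 2 - 1) * g' = (q ^ 2 - 1) * g' by
        rw [← h1]; ring)
    exact this
  constructor
  · have h1 : d * Nat.gcd (q - 1) s = (q - 1) * g' := by
      calc d * Nat.gcd (q - 1) s
          = Nat.gcd (d * (q - 1)) (d * s) := (Nat.gcd_mul_left d _ _).symm
        _ = Nat.gcd ((q - 1) * d) ((q - 1) * (q + 1)) := by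
            rw [hs, hfact, mul_comm d (q - 1)]
        _ = (q - 1) * Nat.gcd d (q + 1) := Nat.gcd_mul_left _ _ _
        _ = (q - 1) * g' := by rw [hg', Nat.gcd_comm]
    rw [hn] at h1
    exact Nat.eq_of_mul_eq_mul_right hg0
      (show n * Nat.gcd (q - 1) s * g' = (q - 1) * g' by rw [← h1]; ring)
  · -- ∃ w, s * n = (q-1) * w
    obtain ⟨w, hw⟩ : g' ∣ q + 1 := hg' ▸ Nat.gcd_dvd_left _ _
    refine ⟨w, ?_⟩
    have h1 : s * n * g' = (q - 1) * w * g' := by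
      calc s * n * g' = d * s := by rw [hn]; ring
        _ = (q - 1) * (q + 1) := by rw [hs, hfact]
        _ = (q - 1) * w * g' := by rw [hw]; ring
    exact Nat.eq_of_mul_eq_mul_right hg0 h1


set_option maxHeartbeats 1000000 in
theorem stmt_17 {F : Type*} [Field F] [Fintype F]
    (q : ℕ) (hq : IsPrimePow q) (hF : Fintype.card F = q ^ 2)
    (d n : ℕ) (hd0 : 0 < d) (hdvd : d ∣ q ^ 2 - 1)
    (hn : d = n * Nat.gcd (q + 1) d)
    (ξ : F) (hξ : orderOf ξ = q ^ 2 - 1)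
    (a b c u v : F) (j : ℤ) (hab : a * b ≠ 0)
    (hb : b = ξ ^ (((q : ℤ) - 1) * j * ((d / n : ℕ) : ℤ)) * a ^ q)
    (hac : a * c ^ q = b ^ q * c)
    (huv : u ^ (q + 1) = v ^ (q + 1)) (hA0 : b * u ≠ a * v)
    (r : ℕ) (hr : 0 < r) (hgcd : Nat.gcd r ((q ^ 2 - 1) / d) = 1)
    (φ : Polynomial F) (hφ : ∀ i : ℕ, (φ.coeff i) ^ q = φ.coeff i)
    (A B : F) (hA : A = b * u - a * v) (hB : B = a * u ^ q - b * v ^ q)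
    (f : F → F)
    (hf : f = fun x => (a * x ^ q + b * x + c) ^ r *
      φ.eval ((a * x ^ q + b * x + c) ^ ((q ^ 2 - 1) / d)) + u * x ^ q + v * x) :
    Function.Bijective f ↔
      (B + A * (A ^ r)⁻¹ * B ^ (q * r) ≠ 0 ∧
        Set.BijOn (fun x => x ^ r * (φ.eval x) ^ ((q ^ 2 - 1) / d))
          {x : F | x ^ n = 1} {x : F | x ^ n = 1}) := by
  classical
  have hq2 : 2 ≤ q := hq.two_le
  have hM0 : 0 < q ^ 2 - 1 := by
    have h4 : 4 ≤ q ^ 2 := by nlinarith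
    omega
  have hq10 : 0 < q - 1 := by omega
  obtain ⟨σ, hσ⟩ := aux_frob q hq hF
  have hn0 : 0 < n := by
    rcases Nat.eq_zero_or_pos n with h | h
    · rw [h, zero_mul] at hn; omega
    · exact h
  set s : ℕ := (q ^ 2 - 1) / d with hs
  have hds : d * s = q ^ 2 - 1 := Nat.mul_div_cancel' hdvd
  have hs0 : 0 < s := by
    rcases Nat.eq_zero_or_pos s with h | h
    · rw [h, mul_zero] at hds; omega
    · exact h
  set g1 : ℕ := Nat.gcd (q + 1) d with hg1
  have hdn : d / n = g1 := by rw [hn, Nat.mul_div_cancel_left _ hn0]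
  rw [hdn] at hb
  obtain ⟨harith1, harith2, w, harith3⟩ := arith_main q d n s g1 hq2 hd0 rfl hn hds
  set m : ℕ := Nat.gcd (q - 1) s with hm
  have hrm : Nat.Coprime r m := Nat.Coprime.coprime_dvd_right (Nat.gcd_dvd_right (q - 1) s) hgcd
  -- basic nonzero facts
  have ha : a ≠ 0 := left_ne_zero_of_mul hab
  have hb0 : b ≠ 0 := right_ne_zero_of_mul hab
  have hAne : A ≠ 0 := by rw [hA]; exact sub_ne_zero.2 hA0
  -- Frobenius utilities
  have hpow2 : ∀ x : F, x ^ q ^ 2 = x := fun x => by rw [← hF]; exact FiniteField.pow_card x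
  have hadd : ∀ x y : F, (x + y) ^ q = x ^ q + y ^ q := fun x y => by
    rw [← hσ, ← hσ, ← hσ, map_add]
  have hsubq : ∀ x y : F, (x - y) ^ q = x ^ q - y ^ q := fun x y => by
    rw [← hσ, ← hσ, ← hσ, map_sub]
  have hφc : ∀ x : F, (φ.eval x) ^ q = φ.eval (x ^ q) := aux_eval q σ hσ φ hφ
  -- ξ facts
  have hξM : ξ ^ (q ^ 2 - 1) = 1 := hξ ▸ pow_orderOf_eq_one ξ
  have hξ0 : ξ ≠ 0 := by
    intro h
    rw [h, zero_pow hM0.ne'] at hξM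
    exact zero_ne_one hξM
  have hgen := aux_gen q hF ξ hξ hq2
  have hξZ : ∀ k : ℤ, ξ ^ (((q ^ 2 - 1 : ℕ) : ℤ) * k) = 1 := fun k => by
    rw [zpow_mul, zpow_natCast, hξM, one_zpow]
  have hcastM : ((q ^ 2 - 1 : ℕ) : ℤ) = (q : ℤ) ^ 2 - 1 := by
    have : 1 ≤ q ^ 2 := by nlinarith
    push_cast [this]
    ring
  have hzp : ∀ (z : ℤ) (k : ℕ), (ξ ^ z) ^ k = ξ ^ (z * k) := fun z k => by
    rw [← zpow_natCast (ξ ^ z), ← zpow_mul]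
  have hordZ : ∀ k : ℤ, ξ ^ k = 1 → ((q ^ 2 - 1 : ℕ) : ℤ) ∣ k := by
    intro k hk
    have h1 : (Units.mk0 ξ hξ0) ^ k = 1 := by
      apply Units.ext
      rw [Units.val_zpow_eq_zpow_val, Units.val_one]
      exact hk
    have h2 : orderOf (Units.mk0 ξ hξ0) = q ^ 2 - 1 := by
      rw [← orderOf_units]
      exact hξ
    rw [← h2]
    exact orderOf_dvd_iff_zpow_eq_one.2 h1
  -- field subgroup facts
  have hFq1 : ∀ t : F, t ≠ 0 → t ^ q = t → t ^ (q - 1) = 1 := by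
    intro t h0 hq'
    have h1 : t ^ (q - 1) * t = 1 * t := by
      rw [← pow_succ, Nat.sub_add_cancel (by omega : 1 ≤ q), hq', one_mul]
    exact mul_right_cancel₀ h0 h1
  have hFq1' : ∀ t : F, t ^ (q - 1) = 1 → t ^ q = t := by
    intro t h1
    calc t ^ q = t ^ (q - 1 + 1) := by rw [Nat.sub_add_cancel (by omega : 1 ≤ q)]
      _ = t ^ (q - 1) * t := pow_succ t _
      _ = t := by rw [h1, one_mul]
  have htsU : ∀ t : F, t ≠ 0 → t ^ q = t → (t ^ s) ^ n = 1 := by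
    intro t h0 hq'
    rw [← pow_mul, harith3, pow_mul, hFq1 t h0 hq', one_pow]
  have hUFq : ∀ x : F, x ^ n = 1 → x ^ q = x := by
    intro x hx
    refine hFq1' x ?_
    have hnm : n * m = q - 1 := harith2
    rw [← hnm, pow_mul, hx, one_pow]
  have hU0 : ∀ x : F, x ^ n = 1 → x ≠ 0 := by
    intro x hx h
    rw [h, zero_pow hn0.ne'] at hx
    exact zero_ne_one hx
  have hndvdM : n ∣ q ^ 2 - 1 := dvd_trans ⟨g1, hn⟩ hdvd
  have hsurj : ∀ x : F, x ^ n = 1 → ∃ t : F, t ^ q = t ∧ t ≠ 0 ∧ t ^ s = x := by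
    intro x hx
    have hx0 : x ≠ 0 := hU0 x hx
    obtain ⟨i, hi⟩ := hgen x hx0
    have hdvd1 : ((q ^ 2 - 1 : ℕ) : ℤ) ∣ i * (n : ℤ) := by
      apply hordZ
      rw [zpow_mul, hi, zpow_natCast, hx]
    obtain ⟨M', hM'⟩ := hndvdM
    have hM'c : ((q ^ 2 - 1 : ℕ) : ℤ) = (n : ℤ) * (M' : ℤ) := by exact_mod_cast congrArg (Nat.cast (R := ℤ)) hM'
    have hn' : (n : ℤ) ≠ 0 := by exact_mod_cast hn0.ne'
    have hdvd2 : (M' : ℤ) ∣ i := by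
      rcases hdvd1 with ⟨k, hk⟩
      refine ⟨k, ?_⟩
      apply mul_right_cancel₀ hn'
      rw [hk, hM'c]
      ring
    obtain ⟨i', hi'⟩ := hdvd2
    have hgcdM' : Nat.gcd ((q + 1) * s) (q ^ 2 - 1) = M' :=
      Nat.eq_of_mul_eq_mul_left hn0 (harith1.trans hM')
    have hbez := Nat.gcd_eq_gcd_ab ((q + 1) * s) (q ^ 2 - 1)
    rw [hgcdM'] at hbez
    set α : ℤ := Nat.gcdA ((q + 1) * s) (q ^ 2 - 1) with hα
    set β : ℤ := Nat.gcdB ((q + 1) * s) (q ^ 2 - 1) with hβ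
    have hnat : (q + 1) * (q - 1) = q ^ 2 - 1 := by
      rw [arith_fact q hq2]
      ring
    have hc : ((q + 1 : ℕ) : ℤ) * ((q - 1 : ℕ) : ℤ) = ((q ^ 2 - 1 : ℕ) : ℤ) := by
      rw [← Nat.cast_mul, hnat]
    refine ⟨ξ ^ (α * i' * ((q + 1 : ℕ) : ℤ)), ?_, zpow_ne_zero _ hξ0, ?_⟩
    · apply hFq1'
      rw [hzp]
      have hexp : α * i' * ((q + 1 : ℕ) : ℤ) * ((q - 1 : ℕ) : ℤ) =
          ((q ^ 2 - 1 : ℕ) : ℤ) * (α * i') := by linear_combination (α * i') * hc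
      rw [hexp, hξZ]
    · rw [hzp]
      have hexp : α * i' * ((q + 1 : ℕ) : ℤ) * ((s : ℕ) : ℤ) =
          i + ((q ^ 2 - 1 : ℕ) : ℤ) * (-(i' * β)) := by
        rw [hi']
        have hbez' : (M' : ℤ) = (((q + 1) * s : ℕ) : ℤ) * α + ((q ^ 2 - 1 : ℕ) : ℤ) * β := hbez
        push_cast at hbez' ⊢
        linear_combination (-i') * hbez'
      rw [hexp, zpow_add₀ hξ0, hξZ, mul_one, hi]
  -- Bezout facts
  have hmeq1 : ∀ ζ : F, ζ ≠ 0 → ζ ^ (q - 1) = 1 → ζ ^ s = 1 → ζ ^ m = 1 := by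
    intro ζ h0 h1 h2
    have hb1 := Nat.gcd_eq_gcd_ab (q - 1) s
    rw [← hm] at hb1
    rw [← zpow_natCast ζ m, hb1, zpow_add₀ h0, zpow_mul, zpow_mul, zpow_natCast,
      zpow_natCast, h1, h2, one_zpow, one_zpow, one_mul]
  have hroot1 : ∀ ζ : F, ζ ≠ 0 → ζ ^ (q - 1) = 1 → ζ ^ s = 1 → ζ ^ r = 1 → ζ = 1 := by
    intro ζ h0 h1 h2 h3
    have hm1 := hmeq1 ζ h0 h1 h2
    have hb1 := Nat.gcd_eq_gcd_ab r m
    rw [hrm, Nat.cast_one] at hb1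
    calc ζ = ζ ^ (1 : ℤ) := (zpow_one ζ).symm
      _ = ζ ^ ((r : ℤ) * Nat.gcdA r m + (m : ℤ) * Nat.gcdB r m) := by rw [← hb1]
      _ = 1 := by
          rw [zpow_add₀ h0, zpow_mul, zpow_mul, zpow_natCast, zpow_natCast, h3, hm1,
            one_zpow, one_zpow, one_mul]
  have hrootex : ∀ η : F, η ≠ 0 → η ^ (q - 1) = 1 → η ^ s = 1 →
      ∃ ζ : F, ζ ≠ 0 ∧ ζ ^ (q - 1) = 1 ∧ ζ ^ s = 1 ∧ ζ ^ r = η := by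
    intro η h0 h1 h2
    have hm1 := hmeq1 η h0 h1 h2
    have hb1 := Nat.gcd_eq_gcd_ab r m
    rw [hrm, Nat.cast_one] at hb1
    refine ⟨η ^ Nat.gcdA r m, zpow_ne_zero _ h0, ?_, ?_, ?_⟩
    · rw [← zpow_natCast (η ^ Nat.gcdA r m), ← zpow_mul, mul_comm, zpow_mul,
        zpow_natCast, h1, one_zpow]
    · rw [← zpow_natCast (η ^ Nat.gcdA r m), ← zpow_mul, mul_comm, zpow_mul,
        zpow_natCast, h2, one_zpow]
    · rw [← zpow_natCast (η ^ Nat.gcdA r m), ← zpow_mul]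
      have hexp : Nat.gcdA r m * (r : ℤ) = 1 - (m : ℤ) * Nat.gcdB r m := by linarith [hb1]
      rw [hexp, zpow_sub₀ h0, zpow_one, zpow_mul, zpow_natCast, hm1, one_zpow, div_one]
  -- scalar identities
  have hzq : (ξ ^ (((q : ℤ) - 1) * j * (g1 : ℤ))) ^ (q + 1) = 1 := by
    rw [hzp]
    have hexp : ((q : ℤ) - 1) * j * (g1 : ℤ) * ((q + 1 : ℕ) : ℤ) =
        ((q ^ 2 - 1 : ℕ) : ℤ) * (j * (g1 : ℤ)) := by
      rw [hcastM]; push_cast; ring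
    rw [hexp, hξZ]
  have hK1 : b ^ (q + 1) = a ^ (q + 1) := by
    rw [hb, mul_pow, hzq, one_mul, ← pow_mul]
    have h1 : q * (q + 1) = q ^ 2 + q := by ring
    rw [h1, pow_add, hpow2]
    exact (pow_succ' a q).symm
  set e : F := ξ ^ (-(j * (g1 : ℤ))) with he
  have he0 : e ≠ 0 := zpow_ne_zero _ hξ0
  have heq : a * e ^ q = b ^ q * e := by
    rw [hb, mul_pow, hzp, ← pow_mul, show q * q = q ^ 2 by ring, hpow2, he, hzp]
    have h2 : ξ ^ (-(j * (g1 : ℤ)) * (q : ℤ)) =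
        ξ ^ (((q : ℤ) - 1) * j * (g1 : ℤ) * (q : ℤ)) * ξ ^ (-(j * (g1 : ℤ))) := by
      rw [← zpow_add₀ hξ0,
        show ((q : ℤ) - 1) * j * (g1 : ℤ) * (q : ℤ) + -(j * (g1 : ℤ)) =
          -(j * (g1 : ℤ)) * (q : ℤ) + ((q ^ 2 - 1 : ℕ) : ℤ) * (j * (g1 : ℤ)) by
            rw [hcastM]; ring,
        zpow_add₀ hξ0, hξZ, mul_one]
    rw [h2]
    ring
  have he1 : e ^ (q - 1) = b ^ q * a⁻¹ := by
    have h1 : a * (e ^ (q - 1) * e) = b ^ q * e := by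
      rw [← pow_succ, Nat.sub_add_cancel (by omega : 1 ≤ q)]
      exact heq
    have h2 : e ^ (q - 1) * a * e = b ^ q * e := by linear_combination h1
    have h3 : e ^ (q - 1) * a = b ^ q := mul_right_cancel₀ he0 h2
    field_simp
    linear_combination h3
  have hesn : e ^ (s * n) = 1 := by
    rw [he, hzp]
    have h1 : -(j * (g1 : ℤ)) * ((s * n : ℕ) : ℤ) = ((q ^ 2 - 1 : ℕ) : ℤ) * (-j) := by
      have h2 : (g1 : ℤ) * ((s * n : ℕ) : ℤ) = ((q ^ 2 - 1 : ℕ) : ℤ) := by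
        have h3 : g1 * (s * n) = q ^ 2 - 1 := by
          rw [← hds, hn]; ring
        exact_mod_cast congrArg (Nat.cast : ℕ → ℤ) h3
      linear_combination (-j) * h2
    rw [h1, hξZ]
  have hAq : A ^ q = b ^ q * u ^ q - a ^ q * v ^ q := by
    rw [hA, hsubq, mul_pow, mul_pow]
  have hBq : B ^ q = a ^ q * u - b ^ q * v := by
    rw [hB, hsubq, mul_pow, mul_pow, ← pow_mul, ← pow_mul, show q * q = q ^ 2 by ring,
      hpow2, hpow2]
  have hK5 : a ^ q * B = b * A ^ q := by
    rw [hB, hAq]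
    linear_combination (-(u ^ q) : F) * hK1
  have hK6 : a * B ^ q = b ^ q * A := by
    rw [hBq, hA]
    linear_combination (-u : F) * hK1
  have hBne : B ≠ 0 := by
    intro h
    apply hAne
    have h1 : b * A ^ q = 0 := by rw [← hK5, h, mul_zero]
    have h2 : A ^ q = 0 := by
      rcases mul_eq_zero.1 h1 with h' | h'
      · exact absurd h' hb0
      · exact h'
    exact pow_eq_zero_iff (by omega : q ≠ 0) |>.1 h2
  have hK3a : A * u ^ q + B * v = 0 := by
    rw [hA, hB]
    linear_combination (b : F) * huv
  have hK3b : A * v ^ q + B * u = 0 := by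
    rw [hA, hB]
    linear_combination (a : F) * huv
  -- the maps
  set gg : F → F := fun y => y ^ r * φ.eval (y ^ s) with hgg
  set hh : F → F := fun x => a * x ^ q + b * x + c with hhh
  set LL : F → F := fun x => u * x ^ q + v * x with hLL
  set TT : F → F := fun z => A * z ^ q + B * z with hTT
  set Ψ : F → F := fun y => A * gg y ^ q + B * gg y with hΨdef
  set Fq : Set F := {t : F | t ^ q = t} with hFqdef
  set SS : Set F := (fun t => t * e) '' Fq with hSS
  set G1 : F → F := fun t => t ^ r * φ.eval (t ^ s * e ^ s) with hG1
  set GG : F → F := fun t => t ^ r * φ.eval (t ^ s) with hGG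
  set Q : F := B + A * (A ^ r)⁻¹ * B ^ (q * r) with hQ
  set Un : Set F := {x : F | x ^ n = 1} with hUn
  set H : F → F := fun x => x ^ r * (φ.eval x) ^ s with hH
  have hfgh : ∀ x : F, f x = gg (hh x) + LL x := by
    intro x
    rw [hf]
    simp only [hgg, hhh, hLL]
    ring
  -- structural identities
  have hθW : ∀ x : F, a * (a * x ^ q + b * x) ^ q = b ^ q * (a * x ^ q + b * x) := by
    intro x
    rw [hadd, mul_pow, mul_pow, ← pow_mul, show q * q = q ^ 2 by ring, hpow2]
    linear_combination (-x : F) * hK1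
  have hTL : ∀ x : F, TT (LL x) = 0 := by
    intro x
    simp only [hTT, hLL]
    rw [hadd, mul_pow, mul_pow, ← pow_mul, show q * q = q ^ 2 by ring, hpow2]
    linear_combination (x ^ q : F) * hK3b + (x : F) * hK3a
  have hTadd : ∀ x y : F, TT (x - y) = TT x - TT y := by
    intro x y
    simp only [hTT]
    rw [hsubq]
    ring
  have hθL : ∀ k : F, a * k ^ q = (-b) * k → a * LL k = -(A * k) := by
    intro k hk
    simp only [hLL]
    rw [hA]
    linear_combination (u : F) * hk
  -- generic root-count bound for "lines"
  have hlinebound : ∀ a' b' : F, a' ≠ 0 → {x : F | a' * x ^ q = b' * x}.ncard ≤ q := by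
    intro a' b' ha'
    have hsub : {x : F | a' * x ^ q = b' * x} ⊆
        insert (0 : F) {x : F | x ^ (q - 1) = b' * a'⁻¹} := by
      intro k hk
      rcases eq_or_ne k 0 with h | h
      · exact Set.mem_insert_iff.2 (Or.inl h)
      refine Set.mem_insert_iff.2 (Or.inr ?_)
      have hk' : a' * k ^ q = b' * k := hk
      rw [show k ^ q = k ^ (q - 1) * k by
        rw [← pow_succ, Nat.sub_add_cancel (by omega : 1 ≤ q)]] at hk'
      have h2 : (a' * k ^ (q - 1) - b') * k = 0 := by linear_combination hk'
      have h3 : a' * k ^ (q - 1) - b' = 0 := by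
        rcases mul_eq_zero.1 h2 with h' | h'
        · exact h'
        · exact absurd h' h
      show k ^ (q - 1) = b' * a'⁻¹
      field_simp
      linear_combination h3
    calc {x : F | a' * x ^ q = b' * x}.ncard
        ≤ (insert (0 : F) {x : F | x ^ (q - 1) = b' * a'⁻¹}).ncard :=
          Set.ncard_le_ncard hsub (Set.toFinite _)
      _ ≤ {x : F | x ^ (q - 1) = b' * a'⁻¹}.ncard + 1 := Set.ncard_insert_le _ _
      _ ≤ (q - 1) + 1 := by
          have := aux_rootbound (q - 1) hq10 (b' * a'⁻¹) (F := F)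
          omega
      _ = q := by omega
  -- the additive map θ and rank-nullity
  set Kset : Set F := {k : F | a * k ^ q = (-b) * k} with hKset
  set θ : F →+ F :=
    { toFun := fun x => a * x ^ q + b * x
      map_zero' := by
        show a * (0 : F) ^ q + b * 0 = 0
        rw [zero_pow (by omega : q ≠ 0)]
        ring
      map_add' := by
        intro x y
        show a * (x + y) ^ q + b * (x + y) = (a * x ^ q + b * x) + (a * y ^ q + b * y)
        rw [hadd]
        ring } with hθdef
  have hθx : ∀ x : F, θ x = a * x ^ q + b * x := fun x => rfl
  have hranknull := aux_ranknull θ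
  rw [hF] at hranknull
  have hkerθ : {x : F | θ x = 0} = Kset := by
    ext k
    simp only [Set.mem_setOf_eq, hθx, hKset]
    constructor
    · intro h'
      linear_combination h'
    · intro h'
      linear_combination h'
  rw [hkerθ] at hranknull
  have hKle : Kset.ncard ≤ q := hlinebound a (-b) ha
  have hrangeθle : (Set.range θ).ncard ≤ q := by
    have hsub : Set.range θ ⊆ {y : F | a * y ^ q = b ^ q * y} := by
      rintro y ⟨x, rfl⟩
      exact hθW x
    exact le_trans (Set.ncard_le_ncard hsub (Set.toFinite _)) (hlinebound a (b ^ q) ha)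
  have hq0 : 0 < q := by omega
  have hrangeθge : q ≤ (Set.range θ).ncard := by
    by_contra hcon
    push_neg at hcon
    have h1 : (Set.range θ).ncard * Kset.ncard < q * q := by
      have h2 : 0 < Kset.ncard := by
        have : (0 : F) ∈ Kset := by
          simp only [hKset, Set.mem_setOf_eq]
          rw [zero_pow (by omega : q ≠ 0)]
          ring
        exact (Set.ncard_pos (Set.toFinite _)).mpr ⟨0, this⟩
      calc (Set.range θ).ncard * Kset.ncard < q * Kset.ncard :=
            (Nat.mul_lt_mul_right h2).mpr hcon
        _ ≤ q * q := Nat.mul_le_mul_left q hKle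
    rw [hranknull] at h1
    have : q ^ 2 = q * q := sq q
    omega
  have hKge : q ≤ Kset.ncard := by
    have h1 : q * q ≤ (Set.range θ).ncard * Kset.ncard := by
      rw [hranknull, sq]
    by_contra hcon
    push_neg at hcon
    have h2 : (Set.range θ).ncard * Kset.ncard < q * q := by
      have h3 : 0 < (Set.range θ).ncard := by omega
      calc (Set.range θ).ncard * Kset.ncard < (Set.range θ).ncard * q :=
            (Nat.mul_lt_mul_left h3).mpr hcon
        _ ≤ q * q := Nat.mul_le_mul_right q hrangeθle
    omega
  -- SS equals the "line" W'' and range hh = SS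
  have hWS : {y : F | a * y ^ q = b ^ q * y} = SS := by
    ext y
    constructor
    · intro hy
      have hy' : a * y ^ q = b ^ q * y := hy
      refine ⟨y * e⁻¹, ?_, ?_⟩
      · show (y * e⁻¹) ^ q = y * e⁻¹
        have hyq : y ^ q = b ^ q * a⁻¹ * y := by
          field_simp
          linear_combination hy'
        have heq' : e ^ q = b ^ q * a⁻¹ * e := by
          field_simp
          linear_combination heq
        rw [mul_pow, inv_pow, hyq, heq']
        rcases eq_or_ne (b ^ q * a⁻¹) 0 with hz | hz
        · exfalso
          exact (mul_ne_zero (pow_ne_zero q hb0) (inv_ne_zero ha)) hz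
        · field_simp
      · field_simp
    · rintro ⟨t, ht, rfl⟩
      have ht' : t ^ q = t := ht
      show a * (t * e) ^ q = b ^ q * (t * e)
      rw [mul_pow, ht']
      linear_combination t * heq
  have hrangesub : Set.range hh ⊆ SS := by
    rw [← hWS]
    rintro y ⟨x, rfl⟩
    show a * (hh x) ^ q = b ^ q * hh x
    simp only [hhh]
    rw [hadd]
    linear_combination hθW x + hac
  have hrhcard : q ≤ (Set.range hh).ncard := by
    have h1 : Set.range hh = (fun y => y + c) '' Set.range θ := by
      ext y
      constructor
      · rintro ⟨x, rfl⟩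
        refine ⟨θ x, ⟨x, rfl⟩, ?_⟩
        show θ x + c = hh x
        rw [hθx]
      · rintro ⟨z, ⟨x, rfl⟩, rfl⟩
        refine ⟨x, ?_⟩
        show hh x = θ x + c
        rw [hθx]
    rw [h1, Set.ncard_image_of_injective _ (add_left_injective c)]
    exact hrangeθge
  have hSSle : SS.ncard ≤ q := by
    rw [← hWS]
    exact hlinebound a (b ^ q) ha
  have hrangeSS : Set.range hh = SS :=
    Set.eq_of_subset_of_ncard_le hrangesub (le_trans hSSle hrhcard) (Set.toFinite _)
  -- kernel of TT equals LL '' Kset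
  have hLinjK : Set.InjOn LL Kset := by
    intro k1 hk1 k2 hk2 hL
    have h1 : a * LL k1 = -(A * k1) := hθL k1 hk1
    have h2 : a * LL k2 = -(A * k2) := hθL k2 hk2
    rw [hL, h2] at h1
    have h3 : A * k1 = A * k2 := by linear_combination h1
    exact mul_left_cancel₀ hAne h3
  have hkerTT : {z : F | A * z ^ q = (-B) * z} = LL '' Kset := by
    refine (Set.eq_of_subset_of_ncard_le ?_ ?_ (Set.toFinite _)).symm
    · rintro z ⟨k, hk, rfl⟩
      have h1 := hTL k
      simp only [hTT] at h1
      show A * (LL k) ^ q = (-B) * LL k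
      linear_combination h1
    · rw [Set.ncard_image_of_injOn hLinjK]
      exact le_trans (hlinebound A (-B) hAne) hKge
  -- T ∘ f = Ψ ∘ hh
  have hTf : ∀ x : F, TT (f x) = Ψ (hh x) := by
    intro x
    simp only [hTT, hΨdef]
    rw [hfgh x, hadd]
    have h1 := hTL x
    simp only [hTT] at h1
    linear_combination h1
  -- Step 1
  have step1 : Function.Injective f ↔ Set.InjOn Ψ (Set.range hh) := by
    constructor
    · intro hinj y1 hy1 y2 hy2 hΨeq
      obtain ⟨x1, rfl⟩ := hy1
      obtain ⟨x2, rfl⟩ := hy2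
      have hz : A * (f x1 - f x2) ^ q = (-B) * (f x1 - f x2) := by
        have h1 : TT (f x1) = TT (f x2) := by rw [hTf, hTf, hΨeq]
        simp only [hTT] at h1
        rw [hsubq]
        linear_combination h1
      have hzmem : (f x1 - f x2) ∈ LL '' Kset := by
        rw [← hkerTT]
        exact hz
      obtain ⟨k, hk, hLk⟩ := hzmem
      have hhk : hh (x2 + k) = hh x2 := by
        simp only [hhh]
        rw [hadd]
        have hk' : a * k ^ q = (-b) * k := hk
        linear_combination hk'
      have hx12 : x2 + k = x1 := by
        apply hinj
        have hLLadd : LL (x2 + k) = LL x2 + LL k := by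
          simp only [hLL]
          rw [hadd]
          ring
        rw [hfgh (x2 + k), hhk, hLLadd, hLk]
        linear_combination -hfgh x2
      rw [← hx12, hhk]
    · intro hΨinj x1 x2 hfeq
      have h1 : hh x1 = hh x2 := hΨinj ⟨x1, rfl⟩ ⟨x2, rfl⟩ (by rw [← hTf, ← hTf, hfeq])
      have h2 : LL x1 = LL x2 := by
        have e1 := hfgh x1
        have e2 := hfgh x2
        rw [hfeq, h1] at e1
        linear_combination e2 - e1
      have h3 : a * (x1 - x2) ^ q = (-b) * (x1 - x2) := by
        simp only [hhh] at h1
        rw [hsubq]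
        linear_combination h1
      have h4 : LL (x1 - x2) = 0 := by
        simp only [hLL] at h2 ⊢
        rw [hsubq]
        linear_combination h2
      have h5 := hθL (x1 - x2) h3
      rw [h4, mul_zero] at h5
      have h6 : A * (x1 - x2) = 0 := by linear_combination h5
      rcases mul_eq_zero.1 h6 with h' | h'
      · exact absurd h' hAne
      · exact sub_eq_zero.1 h'
  -- the Ψ formula on SS
  have hQe : A * e ^ (r * q) + B * e ^ r = Q * e ^ r := by
    have hrq : r * q = r + (q - 1) * r := by
      have h1 : (q - 1) * r = q * r - 1 * r := by
        rw [Nat.sub_mul]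
      have h2 : 1 * r ≤ q * r := Nat.mul_le_mul_right r (by omega)
      have h3 : r * q = q * r := by ring
      omega
    have h1 : e ^ (r * q) = e ^ r * (b ^ q * a⁻¹) ^ r := by
      rw [hrq, pow_add, pow_mul, he1]
    have h2 : B ^ (q * r) = (b ^ q * a⁻¹) ^ r * A ^ r := by
      have hBq' : B ^ q = b ^ q * a⁻¹ * A := by
        field_simp
        linear_combination hK6
      rw [pow_mul, hBq', mul_pow]
    have hArne : (A : F) ^ r ≠ 0 := pow_ne_zero r hAne
    rw [h1, hQ, h2]
    field_simp
    ring
  have hΨe : ∀ t : F, t ^ q = t → Ψ (t * e) = Q * e ^ r * G1 t := by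
    intro t ht
    rcases eq_or_ne t 0 with rfl | ht0
    · simp only [hΨdef, hgg, hGG, hG1]
      rw [zero_mul]
      simp only [zero_pow hr.ne', zero_mul, mul_zero]
      rw [zero_pow (show q ≠ 0 by omega)]
      ring
    · have hy : (t ^ s * e ^ s) ^ q = t ^ s * e ^ s := by
        apply hUFq
        rw [mul_pow, htsU t ht0 ht, one_mul, ← pow_mul, hesn]
      simp only [hΨdef, hgg, hGG, hG1]
      have hg1 : (t * e) ^ r * φ.eval ((t * e) ^ s) = t ^ r * e ^ r * φ.eval (t ^ s * e ^ s) := by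
        rw [mul_pow, mul_pow]
      have htrq : (t ^ r) ^ q = t ^ r := by
        rw [← pow_mul, mul_comm, pow_mul, ht]
      have hgq : (t ^ r * e ^ r * φ.eval (t ^ s * e ^ s)) ^ q
          = t ^ r * e ^ (r * q) * φ.eval (t ^ s * e ^ s) := by
        rw [mul_pow, mul_pow, htrq, hφc, hy, ← pow_mul]
      rw [hg1, hgq]
      linear_combination (t ^ r * φ.eval (t ^ s * e ^ s)) * hQe
  have h1Fq : (1 : F) ^ q = 1 := one_pow q
  have h0Fq : (0 : F) ^ q = 0 := zero_pow (by omega : q ≠ 0)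
  have hFqmul : ∀ t1 t2 : F, t1 ^ q = t1 → t2 ^ q = t2 → (t1 * t2) ^ q = t1 * t2 := by
    intro t1 t2 h1 h2
    rw [mul_pow, h1, h2]
  -- Step 2
  have step2 : Set.InjOn Ψ SS ↔ (Q ≠ 0 ∧ Set.InjOn G1 Fq) := by
    constructor
    · intro hinj
      have hQ0 : Q ≠ 0 := by
        intro hQ0
        have h1 : Ψ (1 * e) = Ψ (0 * e) := by
          rw [hΨe 1 h1Fq, hΨe 0 h0Fq, hQ0]
          ring
        have h2 : (1 : F) * e = 0 * e := hinj ⟨1, h1Fq, rfl⟩ ⟨0, h0Fq, rfl⟩ h1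
        rw [one_mul, zero_mul] at h2
        exact he0 h2
      refine ⟨hQ0, ?_⟩
      intro t1 ht1 t2 ht2 hG
      have h1 : Ψ (t1 * e) = Ψ (t2 * e) := by rw [hΨe t1 ht1, hΨe t2 ht2, hG]
      have h2 := hinj ⟨t1, ht1, rfl⟩ ⟨t2, ht2, rfl⟩ h1
      exact mul_right_cancel₀ he0 h2
    · rintro ⟨hQ0, hinj⟩ y1 hy1 y2 hy2 hΨ12
      obtain ⟨t1, ht1, rfl⟩ := hy1
      obtain ⟨t2, ht2, rfl⟩ := hy2
      rw [hΨe t1 ht1, hΨe t2 ht2] at hΨ12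
      have h3 : G1 t1 = G1 t2 :=
        mul_left_cancel₀ (mul_ne_zero hQ0 (pow_ne_zero r he0)) hΨ12
      rw [hinj ht1 ht2 h3]
  -- Step 3
  have step3 : Set.InjOn G1 Fq ↔ Set.InjOn GG Fq := by
    have hes : ((e ^ s)⁻¹ : F) ^ n = 1 := by
      rw [inv_pow, ← pow_mul, hesn, inv_one]
    obtain ⟨t0, ht0q, ht00, ht0s⟩ := hsurj _ hes
    have hkey : ∀ t : F, G1 (t0 * t) = t0 ^ r * GG t := by
      intro t
      simp only [hG1, hGG]
      rw [mul_pow t0 t s, ht0s, mul_pow t0 t r]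
      rw [show (e ^ s)⁻¹ * t ^ s * e ^ s = t ^ s by field_simp]
      ring
    constructor
    · intro hinj t1 ht1 t2 ht2 hG
      have h1 : G1 (t0 * t1) = G1 (t0 * t2) := by rw [hkey, hkey, hG]
      have h2 := hinj (hFqmul t0 t1 ht0q ht1) (hFqmul t0 t2 ht0q ht2) h1
      exact mul_left_cancel₀ ht00 h2
    · intro hinj t1 ht1 t2 ht2 hG
      have ht0inv : (t0⁻¹ : F) ^ q = t0⁻¹ := by rw [inv_pow, ht0q]
      have hx1 : (t0⁻¹ * t1) ^ q = t0⁻¹ * t1 := hFqmul _ _ ht0inv ht1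
      have hx2 : (t0⁻¹ * t2) ^ q = t0⁻¹ * t2 := hFqmul _ _ ht0inv ht2
      have h1 : t0 ^ r * GG (t0⁻¹ * t1) = t0 ^ r * GG (t0⁻¹ * t2) := by
        rw [← hkey, ← hkey, show t0 * (t0⁻¹ * t1) = t1 by field_simp,
          show t0 * (t0⁻¹ * t2) = t2 by field_simp]
        exact hG
      have h2 := mul_left_cancel₀ (pow_ne_zero r ht00) h1
      have h3 := hinj hx1 hx2 h2
      calc t1 = t0 * (t0⁻¹ * t1) := by field_simp
        _ = t0 * (t0⁻¹ * t2) := by rw [h3]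
        _ = t2 := by field_simp
  -- Step 4 preliminaries
  have hGG0 : GG 0 = 0 := by
    simp only [hGG]
    rw [zero_pow hr.ne', zero_mul]
  have hφFq : ∀ x : F, x ^ q = x → (φ.eval x) ^ q = φ.eval x := by
    intro x hx
    rw [hφc, hx]
  have hGFq : ∀ t : F, t ^ q = t → (GG t) ^ q = GG t := by
    intro t ht
    simp only [hGG]
    apply hFqmul
    · rw [← pow_mul, mul_comm, pow_mul, ht]
    · exact hφFq _ (by rw [← pow_mul, mul_comm, pow_mul, ht])
  have hGGne : Set.InjOn GG Fq → ∀ t : F, t ^ q = t → t ≠ 0 → GG t ≠ 0 := by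
    intro hinj t ht ht0 h
    exact ht0 (hinj ht h0Fq (by rw [h, hGG0]))
  have hGs : ∀ t : F, GG t ^ s = H (t ^ s) := by
    intro t
    simp only [hGG, hH]
    rw [mul_pow, pow_right_comm]
  have step4 : Set.InjOn GG Fq ↔ Set.BijOn H Un Un := by
    constructor
    · intro hinj
      have hφU : ∀ x : F, x ^ n = 1 → φ.eval x ≠ 0 := by
        intro x hx hzero
        obtain ⟨t, htq, ht0, hts⟩ := hsurj x hx
        refine hGGne hinj t htq ht0 ?_
        simp only [hGG]
        rw [hts, hzero, mul_zero]
      have hmaps : Set.MapsTo H Un Un := by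
        intro x hx
        have hx' : x ^ n = 1 := hx
        have hφx : φ.eval x ≠ 0 := hφU x hx'
        have hφxq : φ.eval x ^ (q - 1) = 1 := hFq1 _ hφx (hφFq x (hUFq x hx'))
        show H x ∈ Un
        simp only [hH, hUn, Set.mem_setOf_eq]
        rw [mul_pow, ← pow_mul, ← pow_mul, mul_comm r n, pow_mul, hx', one_pow,
          harith3, pow_mul, hφxq, one_pow, one_mul]
      have hinjU : Set.InjOn H Un := by
        intro x1 hx1 x2 hx2 hH12
        obtain ⟨t1, ht1q, ht10, ht1s⟩ := hsurj x1 hx1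
        obtain ⟨t2, ht2q, ht20, ht2s⟩ := hsurj x2 hx2
        have hGs12 : GG t1 ^ s = GG t2 ^ s := by
          rw [hGs, hGs, ht1s, ht2s]
          exact hH12
        have hG1ne : GG t1 ≠ 0 := hGGne hinj t1 ht1q ht10
        have hG2ne : GG t2 ≠ 0 := hGGne hinj t2 ht2q ht20
        set η : F := GG t1 * (GG t2)⁻¹ with hη
        have hη0 : η ≠ 0 := mul_ne_zero hG1ne (inv_ne_zero hG2ne)
        have hηs : η ^ s = 1 := by
          rw [hη, mul_pow, inv_pow, hGs12, mul_inv_cancel₀ (pow_ne_zero s hG2ne)]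
        have hηqq : η ^ q = η := by
          rw [hη, mul_pow, inv_pow, hGFq t1 ht1q, hGFq t2 ht2q]
        have hηq : η ^ (q - 1) = 1 := hFq1 _ hη0 hηqq
        obtain ⟨ζ, hζ0, hζq, hζs, hζr⟩ := hrootex η hη0 hηq hηs
        have hG1eq : GG (ζ * t2) = GG t1 := by
          simp only [hGG]
          rw [mul_pow ζ t2 s, hζs, one_mul, mul_pow ζ t2 r, hζr, hη]
          field_simp
          ring
        have hζt2 : (ζ * t2) ^ q = ζ * t2 := hFqmul _ _ (hFq1' ζ hζq) ht2q
        have ht12 : ζ * t2 = t1 := hinj hζt2 ht1q hG1eq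
        rw [← ht1s, ← ht12, mul_pow, hζs, one_mul, ht2s]
      refine ⟨hmaps, hinjU, ?_⟩
      have himg : H '' Un = Un := by
        apply Set.eq_of_subset_of_ncard_le
        · exact Set.image_subset_iff.2 hmaps
        · rw [Set.ncard_image_of_injOn hinjU]
        · exact Set.toFinite _
      show Un ⊆ H '' Un
      rw [himg]
    · rintro ⟨hmaps, hinjU, hsurjU⟩
      have hφU : ∀ x : F, x ^ n = 1 → φ.eval x ≠ 0 := by
        intro x hx hzero
        have h1 := hmaps hx
        simp only [hH, hUn, Set.mem_setOf_eq] at h1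
        rw [hzero, zero_pow hs0.ne', mul_zero, zero_pow hn0.ne'] at h1
        exact zero_ne_one h1
      have hGne : ∀ t : F, t ^ q = t → t ≠ 0 → GG t ≠ 0 := by
        intro t ht ht0
        simp only [hGG]
        exact mul_ne_zero (pow_ne_zero r ht0) (hφU _ (htsU t ht0 ht))
      intro t1 ht1 t2 ht2 hGG12
      rcases eq_or_ne t1 0 with rfl | ht10
      · rcases eq_or_ne t2 0 with rfl | ht20
        · rfl
        · exact absurd (hGG12.symm.trans hGG0) (hGne t2 ht2 ht20)
      rcases eq_or_ne t2 0 with rfl | ht20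
      · exact absurd (hGG12.trans hGG0) (hGne t1 ht1 ht10)
      have hx1 : (t1 ^ s) ^ n = 1 := htsU t1 ht10 ht1
      have hx2 : (t2 ^ s) ^ n = 1 := htsU t2 ht20 ht2
      have hHeq : H (t1 ^ s) = H (t2 ^ s) := by rw [← hGs, ← hGs, hGG12]
      have hseq : t1 ^ s = t2 ^ s := hinjU hx1 hx2 hHeq
      set ζ : F := t1 * t2⁻¹ with hζ
      have hζ0 : ζ ≠ 0 := mul_ne_zero ht10 (inv_ne_zero ht20)
      have hζs : ζ ^ s = 1 := by
        rw [hζ, mul_pow, inv_pow, hseq, mul_inv_cancel₀ (pow_ne_zero s ht20)]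
      have hζqq : ζ ^ q = ζ := hFqmul _ _ ht1 (by rw [inv_pow, ht2])
      have hζq1 : ζ ^ (q - 1) = 1 := hFq1 _ hζ0 hζqq
      have ht1eq : ζ * t2 = t1 := by
        rw [hζ]
        field_simp
      have hζr : ζ ^ r = 1 := by
        have h1 : GG t1 = ζ ^ r * GG t2 := by
          simp only [hGG]
          rw [← ht1eq, mul_pow ζ t2 s, hζs, one_mul, mul_pow ζ t2 r]
          ring
        rw [hGG12] at h1
        have h2 : (1 : F) * GG t2 = ζ ^ r * GG t2 := by rw [one_mul]; exact h1
        exact (mul_right_cancel₀ (hGne t2 ht2 ht20) h2).symm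
      have hζ1 : ζ = 1 := hroot1 ζ hζ0 hζq1 hζs hζr
      rw [← ht1eq, hζ1, one_mul]
  -- final assembly
  rw [show Function.Bijective f ↔ Function.Injective f from (Finite.injective_iff_bijective).symm,
    step1, hrangeSS, step2, step3, step4]
end

section
/- Let q be a prime power, let d be a positive divisor of q−1, let r be a positive integer, and let φ be a polynomial with coefficients in the subfield F_q of F_{q²}. Let c, u ∈ F_q and e ∈ F_{q²} with e + e^q = 0. Then f(x) = (x^q + x + c)^r · φ((x^q + x + c)^{(q²−1)/d}) + u·x^q + (u − e)·x is a permutation polynomial of F_{q²} if and only if e ≠ 0. -/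
theorem stmt_18 {F : Type*} [Field F] [Fintype F]
    (q : ℕ) (hq : IsPrimePow q) (hF : Fintype.card F = q ^ 2)
    (d : ℕ) (hd0 : 0 < d) (hdvd : d ∣ q - 1)
    (r : ℕ) (hr : 0 < r)
    (φ : Polynomial F) (hφ : ∀ i : ℕ, (φ.coeff i) ^ q = φ.coeff i)
    (c u e : F) (hc : c ^ q = c) (hu : u ^ q = u) (he : e + e ^ q = 0)
    (f : F → F)
    (hf : f = fun x => (x ^ q + x + c) ^ r *
      φ.eval ((x ^ q + x + c) ^ ((q ^ 2 - 1) / d)) + u * x ^ q + (u - e) * x) :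
    Function.Bijective f ↔ e ≠ 0 := by
  classical
  have hq1 : 1 < q := hq.two_le
  -- characteristic
  obtain ⟨p, k, hp, hk, hpk⟩ := hq
  haveI hfact : Fact p.Prime := ⟨hp.nat_prime⟩
  haveI hcharP : CharP F p := by
    obtain ⟨n, hn, hcard⟩ := FiniteField.card F (ringChar F)
    have h1 : ringChar F ^ (n : ℕ) = p ^ (2 * k) := by
      rw [← hcard, hF, ← hpk, ← pow_mul, mul_comm k 2]
    have hdvd' : p ∣ ringChar F ^ (n : ℕ) := by
      rw [h1]; exact dvd_pow_self p (by omega)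
    have : p = ringChar F :=
      ((Nat.prime_dvd_prime_iff_eq hp.nat_prime hn).mp (hp.nat_prime.dvd_of_dvd_pow hdvd'))
    rw [this]; exact ringChar.charP F
  have addq : ∀ x y : F, (x + y) ^ q = x ^ q + y ^ q := by
    intro x y; rw [← hpk]; exact add_pow_char_pow x y p k
  have subq : ∀ x y : F, (x - y) ^ q = x ^ q - y ^ q := by
    intro x y; rw [← hpk]; exact sub_pow_char_pow (p := p) x y k
  have hq2 : ∀ x : F, (x ^ q) ^ q = x := by
    intro x
    rw [← pow_mul, show q * q = q ^ 2 by ring, ← hF]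
    exact FiniteField.pow_card x
  -- eval fixed under frobenius^k
  have hev : ∀ t : F, t ^ q = t → (φ.eval t) ^ q = φ.eval t := by
    intro t ht
    set σ : F →+* F := iterateFrobenius F p k with hσ
    have hσx : ∀ x : F, σ x = x ^ q := by
      intro x; rw [hσ, iterateFrobenius_def, hpk]
    have hmap : φ.map σ = φ := by
      ext i
      rw [Polynomial.coeff_map, hσx, hφ]
    calc (φ.eval t) ^ q = σ (φ.eval t) := (hσx _).symm
      _ = φ.eval₂ σ (σ t) := (Polynomial.eval₂_at_apply σ t).symm
      _ = (φ.map σ).eval (σ t) := (Polynomial.eval_map σ (σ t)).symm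
      _ = φ.eval t := by rw [hmap, hσx, ht]
  set s := (q ^ 2 - 1) / d with hs
  -- the trace-like part is fixed
  have hT : ∀ x : F, (x ^ q + x + c) ^ q = x ^ q + x + c := by
    intro x
    rw [addq, addq, hq2, hc, add_comm (x ^ q) x]
  have hE : ∀ x : F,
      ((x ^ q + x + c) ^ r * φ.eval ((x ^ q + x + c) ^ s)) ^ q
        = (x ^ q + x + c) ^ r * φ.eval ((x ^ q + x + c) ^ s) := by
    intro x
    have h1 : ((x ^ q + x + c) ^ r) ^ q = (x ^ q + x + c) ^ r := by
      rw [← pow_mul, mul_comm, pow_mul, hT]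
    have h2 : ((x ^ q + x + c) ^ s) ^ q = (x ^ q + x + c) ^ s := by
      rw [← pow_mul, mul_comm, pow_mul, hT]
    rw [mul_pow, h1, hev _ h2]
  have he' : e ^ q = -e := by linear_combination he
  have hfx : ∀ x : F, f x = (x ^ q + x + c) ^ r * φ.eval ((x ^ q + x + c) ^ s)
      + u * x ^ q + (u - e) * x := by intro x; rw [hf]
  have hkey : ∀ x : F, (f x) ^ q
      = (x ^ q + x + c) ^ r * φ.eval ((x ^ q + x + c) ^ s) + u * x + (u + e) * x ^ q := by
    intro x
    rw [hfx, addq, addq, hE, mul_pow, mul_pow, hu, hq2, subq, hu, he', sub_neg_eq_add]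
  constructor
  · -- bijective → e ≠ 0
    rintro hbij rfl
    -- find a ≠ b with same trace
    have hne0 : (Polynomial.X ^ q - Polynomial.X : Polynomial F) ≠ 0 :=
      FiniteField.X_pow_card_sub_X_ne_zero F hq1
    have hcard : ((Polynomial.X ^ q - Polynomial.X : Polynomial F).roots.toFinset).card
        < (Finset.univ : Finset F).card := by
      calc ((Polynomial.X ^ q - Polynomial.X : Polynomial F).roots.toFinset).card
          ≤ Multiset.card (Polynomial.X ^ q - Polynomial.X : Polynomial F).roots :=
            Multiset.toFinset_card_le _
        _ ≤ (Polynomial.X ^ q - Polynomial.X : Polynomial F).natDegree :=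
            Polynomial.card_roots' _
        _ = q := FiniteField.X_pow_card_sub_X_natDegree_eq F hq1
        _ < q ^ 2 := by nlinarith
        _ = (Finset.univ : Finset F).card := by rw [← hF, Finset.card_univ]
    have hmaps : ∀ x ∈ (Finset.univ : Finset F), x ^ q + x ∈
        (Polynomial.X ^ q - Polynomial.X : Polynomial F).roots.toFinset := by
      intro x _
      rw [Multiset.mem_toFinset, Polynomial.mem_roots hne0]
      have hfix : (x ^ q + x) ^ q = x ^ q + x := by
        rw [addq, hq2, add_comm]
      simp [Polynomial.IsRoot, hfix]
    obtain ⟨a, -, b, -, hab, htr⟩ :=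
      Finset.exists_ne_map_eq_of_card_lt_of_maps_to hcard hmaps
    refine hab (hbij.injective ?_)
    have h3 : a ^ q + a + c = b ^ q + b + c := by rw [htr]
    have hG : (a ^ q + a + c) ^ r * φ.eval ((a ^ q + a + c) ^ s)
        = (b ^ q + b + c) ^ r * φ.eval ((b ^ q + b + c) ^ s) := by rw [h3]
    rw [hfx, hfx]
    linear_combination hG + u * htr
  · -- e ≠ 0 → bijective
    intro hne
    rw [Finite.injective_iff_bijective.symm]
    intro a b hab
    have hpow : (f a) ^ q = (f b) ^ q := by rw [hab]
    rw [hkey, hkey] at hpow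
    rw [hfx, hfx] at hab
    have h1 : e * (a ^ q + a) = e * (b ^ q + b) := by linear_combination hpow - hab
    have h2 : a ^ q + a = b ^ q + b := mul_left_cancel₀ hne h1
    have h3 : a ^ q + a + c = b ^ q + b + c := by rw [h2]
    have hG : (a ^ q + a + c) ^ r * φ.eval ((a ^ q + a + c) ^ s)
        = (b ^ q + b + c) ^ r * φ.eval ((b ^ q + b + c) ^ s) := by rw [h3]
    have h4 : e * a = e * b := by linear_combination u * h2 - hab + hG
    exact mul_left_cancel₀ hne h4
end

section
/- Let q be a prime power, let d be a positive divisor of q−1, let r be an even positive integer, and let φ be a polynomial with coefficients in the subfield F_q of F_{q²}. Let u, e ∈ F_q and c ∈ F_{q²} with c + c^q = 0. Then f(x) = (x^q − x + c)^r · φ((x^q − x + c)^{(q²−1)/d}) + u·x^q + (u + e)·x is a permutation polynomial of F_{q²} if and only if e·(2u + e) ≠ 0. -/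
theorem aux_exists_not_fix {F : Type*} [Field F] [Fintype F] (q : ℕ) (h2 : 2 ≤ q)
    (hF : Fintype.card F = q ^ 2) : ∃ z : F, z ^ q ≠ z := by
  classical
  by_contra h
  push_neg at h
  obtain ⟨g, hg⟩ := IsCyclic.exists_generator (α := Fˣ)
  have hord : orderOf g = q ^ 2 - 1 := by
    rw [orderOf_eq_card_of_forall_mem_zpowers hg, Nat.card_eq_fintype_card, Fintype.card_units, hF]
  have hgq : g ^ q = g := by
    ext
    push_cast
    exact h _
  have h1 : g ^ (q - 1) = 1 := by
    have : g ^ (q - 1) * g = g := by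
      rw [← pow_succ, Nat.sub_add_cancel (by omega), hgq]
    exact mul_right_cancel (by rw [this, one_mul])
  have hdvd := orderOf_dvd_of_pow_eq_one h1
  rw [hord] at hdvd
  have := Nat.le_of_dvd (by omega) hdvd
  have h4 : 2 * q ≤ q ^ 2 := by nlinarith
  omega

theorem stmt_19 {F : Type*} [Field F] [Fintype F]
    (q : ℕ) (hq : IsPrimePow q) (hF : Fintype.card F = q ^ 2)
    (d : ℕ) (hd0 : 0 < d) (hdvd : d ∣ q - 1)
    (r : ℕ) (hr : 0 < r) (hre : Even r)
    (φ : Polynomial F) (hφ : ∀ i : ℕ, (φ.coeff i) ^ q = φ.coeff i)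
    (u e c : F) (hu : u ^ q = u) (he : e ^ q = e) (hc : c + c ^ q = 0)
    (f : F → F)
    (hf : f = fun x => (x ^ q - x + c) ^ r *
      φ.eval ((x ^ q - x + c) ^ ((q ^ 2 - 1) / d)) + u * x ^ q + (u + e) * x) :
    Function.Bijective f ↔ e * (2 * u + e) ≠ 0 := by
  classical
  obtain ⟨p, n, hpp, hn, rfl⟩ := hq
  have hp' : p.Prime := hpp.nat_prime
  set q := p ^ n with hqdef
  have hq2 : 2 ≤ q := by
    calc 2 ≤ p := hp'.two_le
    _ = p ^ 1 := (pow_one p).symm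
    _ ≤ p ^ n := Nat.pow_le_pow_right hp'.pos hn
  -- characteristic
  have hcharF : CharP F (ringChar F) := ringChar.charP F
  have hrprime : (ringChar F).Prime := CharP.char_is_prime F (ringChar F)
  have hrdvd : ringChar F ∣ q ^ 2 := by
    rw [← hF]
    exact (CharP.cast_eq_zero_iff F (ringChar F) _).mp (FiniteField.cast_card_eq_zero F)
  have hrp : ringChar F = p := by
    have h1 : ringChar F ∣ q := hrprime.dvd_of_dvd_pow hrdvd
    have h2 : ringChar F ∣ p := by
      rw [hqdef] at h1
      exact hrprime.dvd_of_dvd_pow h1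
    exact (Nat.prime_dvd_prime_iff_eq hrprime hp').mp h2
  haveI hcp : CharP F p := hrp ▸ hcharF
  haveI : ExpChar F p := ExpChar.prime hp'
  set σ : F →+* F := iterateFrobenius F p n with hσdef
  have hσ : ∀ x : F, σ x = x ^ q := fun x => iterateFrobenius_def p n x
  have hxq2 : ∀ x : F, (x ^ q) ^ q = x := by
    intro x
    rw [← pow_mul, ← pow_two, ← hF]
    exact FiniteField.pow_card x
  have hc' : c ^ q = -c := by linear_combination hc
  set ψ : F → F := fun x => x ^ q - x + c with hψdef
  have hψq : ∀ x, (ψ x) ^ q = -ψ x := by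
    intro x
    calc (ψ x) ^ q = σ (ψ x) := (hσ _).symm
    _ = (x ^ q) ^ q - x ^ q + c ^ q := by
        simp only [hψdef, map_add, map_sub]
        rw [hσ, hσ, hσ]
    _ = -ψ x := by rw [hxq2, hc']; simp only [hψdef]; ring
  set M := (q ^ 2 - 1) / d with hMdef
  have hneg1 : (-1 : F) ^ M = 1 := by
    rcases eq_or_ne p 2 with h2 | h2
    · subst h2
      haveI : CharP F 2 := hcp
      have : (-1 : F) = 1 := by
        rw [neg_eq_iff_add_eq_zero]
        exact CharTwo.add_self_eq_zero 1
      rw [this, one_pow]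
    · have hqodd : Odd q := (hp'.odd_of_ne_two h2).pow
      obtain ⟨k, hk⟩ := hdvd
      obtain ⟨a, ha⟩ : ∃ a, q = a + 1 := ⟨q - 1, by omega⟩
      have hq21 : q ^ 2 - 1 = d * (k * (q + 1)) := by
        have h5 : (a) * (a + 2) + 1 = (a + 1) ^ 2 := by ring
        have h6 : q ^ 2 - 1 = (q - 1) * (q + 1) := by
          rw [ha]
          have : (a + 1) ^ 2 - 1 = a * (a + 2) := by omega
          rw [this]
          congr 1 <;> omega
        rw [h6, hk]
        ring
      have hMval : M = k * (q + 1) := by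
        rw [hMdef, hq21, Nat.mul_div_cancel_left _ hd0]
      have hMeven : Even M := by
        rw [hMval]
        exact (hqodd.add_one).mul_left k
      exact hMeven.neg_one_pow
  have hMfix : ∀ x, (ψ x ^ M) ^ q = ψ x ^ M := by
    intro x
    rw [← pow_mul, mul_comm, pow_mul, hψq, neg_pow, hneg1, one_mul]
  have hφfix : ∀ t : F, t ^ q = t → (φ.eval t) ^ q = φ.eval t := by
    intro t ht
    have hmap : φ.map σ = φ := by
      ext i
      rw [Polynomial.coeff_map, hσ, hφ]
    calc (φ.eval t) ^ q = σ (φ.eval t) := (hσ _).symm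
    _ = φ.eval₂ σ (σ t) := (Polynomial.eval₂_hom σ t).symm
    _ = (φ.map σ).eval (σ t) := (Polynomial.eval_map σ (σ t)).symm
    _ = φ.eval t := by rw [hmap, hσ, ht]
  set T : F → F := fun x => ψ x ^ r * φ.eval (ψ x ^ M) with hTdef
  have hTfix : ∀ x, (T x) ^ q = T x := by
    intro x
    simp only [hTdef]
    rw [mul_pow, ← pow_mul, mul_comm r q, pow_mul, hψq, hre.neg_pow,
      hφfix _ (hMfix x)]
  have hfx : ∀ x, f x = T x + u * x ^ q + (u + e) * x := by
    intro x
    simp only [hf, hTdef, hψdef, hMdef]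
  have hσside : ∀ z : F, (T z + u * z ^ q + (u + e) * z) ^ q
      = T z + u * z + (u + e) * z ^ q := by
    intro z
    calc (T z + u * z ^ q + (u + e) * z) ^ q = σ (T z + u * z ^ q + (u + e) * z) := (hσ _).symm
    _ = T z + u * z + (u + e) * z ^ q := by
        simp only [map_add, map_mul]
        simp only [hσ, hTfix, hxq2, hu, he]
  constructor
  · intro hbij h0
    rcases mul_eq_zero.mp h0 with he0 | hue0
    · have hfq : ∀ x, (f x) ^ q = f x := by
        intro x
        rw [hfx x, hσside x, he0]
        ring
      obtain ⟨z, hz⟩ := aux_exists_not_fix q hq2 hF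
      obtain ⟨x, hxz⟩ := hbij.surjective z
      exact hz (by rw [← hxz]; exact hfq x)
    · have hψ10 : ψ 1 = ψ 0 := by
        simp only [hψdef]
        rw [one_pow, zero_pow (by omega : q ≠ 0)]
        ring
      have hT10 : T 1 = T 0 := by simp only [hTdef, hψ10]
      have hf10 : f 1 = f 0 := by
        rw [hfx 1, hfx 0, hT10, one_pow, zero_pow (by omega : q ≠ 0)]
        linear_combination hue0
      exact one_ne_zero (hbij.injective hf10)
  · intro hne
    have he0 : e ≠ 0 := fun h => hne (by rw [h, zero_mul])
    have hue : (2 * u + e) ≠ 0 := fun h => hne (by rw [h, mul_zero])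
    rw [← Finite.injective_iff_bijective]
    intro x y hxy0
    have hxy : T x + u * x ^ q + (u + e) * x = T y + u * y ^ q + (u + e) * y := by
      rw [← hfx, ← hfx, hxy0]
    have hq' : T x + u * x + (u + e) * x ^ q = T y + u * y + (u + e) * y ^ q := by
      rw [← hσside x, ← hσside y, hxy]
    have hsub : e * (x - x ^ q) = e * (y - y ^ q) := by linear_combination hxy - hq'
    have hDa : x - x ^ q = y - y ^ q := mul_left_cancel₀ he0 hsub
    have hψxy : ψ x = ψ y := by
      simp only [hψdef]
      linear_combination -hDa
    have hTxy : T x = T y := by simp only [hTdef, hψxy]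
    have hfin : (2 * u + e) * (x - y) = 0 := by
      linear_combination hxy - hTxy + u * hDa
    exact sub_eq_zero.mp ((mul_eq_zero.mp hfin).resolve_left hue)
end
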